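/- arXiv:gr-qc/0407094 — 2 statements merged into one kernel-verified Lean document; each statement's English description precedes it below -/
import Mathlib

section
/- A bicontinuous poset is Hausdorff in its interval topology. -/
open Set

/-- `a` is way below `x`. -/
def wayBelow {α : Type*} [Preorder α] (a x : α) : Prop :=
  ∀ S : Set α, S.Nonempty → DirectedOn (· ≤ ·) S → ∀ d, IsLUB S d → x ≤ d →
    ∃ s ∈ S, a ≤ s

/-- A poset is continuous if every element is the supremum of a directed set
of elements way below it. -/
def ContinuousPoset (α : Type*) [Preorder α] : Prop :=
  ∀ x : α, ∃ S : Set α, S ⊆ {a | wayBelow a x} ∧ S.Nonempty ∧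
    DirectedOn (· ≤ ·) S ∧ IsLUB S x

/-- A basis for a continuous poset. -/
def PosetBasis {α : Type*} [Preorder α] (B : Set α) : Prop :=
  ∀ x : α, ∃ S : Set α, S ⊆ B ∩ {a | wayBelow a x} ∧ S.Nonempty ∧
    DirectedOn (· ≤ ·) S ∧ IsLUB S x

/-- Scott open sets: upper sets inaccessible by directed suprema. -/
def ScottOpen {α : Type*} [Preorder α] (U : Set α) : Prop :=
  IsUpperSet U ∧ ∀ S : Set α, S.Nonempty → DirectedOn (· ≤ ·) S → ∀ d, IsLUB S d →
    d ∈ U → (S ∩ U).Nonempty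

/-- The Scott topology. -/
def scottTop (α : Type*) [Preorder α] : TopologicalSpace α :=
  TopologicalSpace.generateFrom {U | ScottOpen U}

/-- A bicontinuous poset. -/
def Bicontinuous (α : Type*) [Preorder α] : Prop :=
  ContinuousPoset α ∧
  (∀ x y : α, wayBelow x y ↔
    ∀ S : Set α, S.Nonempty → DirectedOn (· ≥ ·) S → ∀ i, IsGLB S i → i ≤ x →
      ∃ s ∈ S, s ≤ y) ∧
  (∀ x : α, DirectedOn (· ≥ ·) {y | wayBelow x y} ∧ IsGLB {y | wayBelow x y} x)

/-- The basic open intervals `(a,b) = {x | a ≪ x ≪ b}`. -/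
def intervalBasis (α : Type*) [Preorder α] : Set (Set α) :=
  {s | ∃ a b : α, s = {x | wayBelow a x ∧ wayBelow x b}}

/-- The interval topology, generated by the sets `(a,b)`. -/
def intervalTop (α : Type*) [Preorder α] : TopologicalSpace α :=
  TopologicalSpace.generateFrom (intervalBasis α)

/-- A globally hyperbolic poset: bicontinuous, with compact closed intervals. -/
def GloballyHyperbolic (α : Type*) [PartialOrder α] : Prop :=
  Bicontinuous α ∧ ∀ a b : α, @IsCompact α (intervalTop α) (Set.Icc a b)

/-- The poset of closed intervals `[a,b]`, `a ≤ b`, under reverse inclusion. -/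
def IX (α : Type*) [PartialOrder α] := {p : α × α // p.1 ≤ p.2}

instance IX.instPartialOrder {α : Type*} [PartialOrder α] : PartialOrder (IX α) where
  le x y := x.1.1 ≤ y.1.1 ∧ y.1.2 ≤ x.1.2
  le_refl x := ⟨le_refl _, le_refl _⟩
  le_trans x y z h1 h2 := ⟨h1.1.trans h2.1, h2.2.trans h1.2⟩
  le_antisymm x y h1 h2 :=
    Subtype.ext (Prod.ext_iff.mpr ⟨le_antisymm h1.1 h2.1, le_antisymm h2.2 h1.2⟩)

section Rel

variable {β : Type*}

/-- Directedness with respect to an arbitrary relation. -/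
def relDirectedOn (r : β → β → Prop) (S : Set β) : Prop :=
  ∀ x ∈ S, ∀ y ∈ S, ∃ z ∈ S, r x z ∧ r y z

/-- Least upper bound with respect to an arbitrary relation. -/
def relIsLUB (r : β → β → Prop) (S : Set β) (d : β) : Prop :=
  (∀ s ∈ S, r s d) ∧ ∀ u, (∀ s ∈ S, r s u) → r d u

/-- The way-below relation with respect to an arbitrary relation. -/
def relWayBelow (r : β → β → Prop) (a x : β) : Prop :=
  ∀ S : Set β, S.Nonempty → relDirectedOn r S → ∀ d, relIsLUB r S d → r x d →
    ∃ s ∈ S, r a s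

/-- An abstract basis: a transitive relation, interpolative from the `-` direction. -/
def AbstractBasis (r : β → β → Prop) : Prop :=
  Transitive r ∧ ∀ (F : Finset β) (x : β), (∀ y ∈ F, r y x) →
    ∃ z, (∀ y ∈ F, r y z) ∧ r z x

/-- Interpolation in the `+` direction. -/
def PlusInterpolative (r : β → β → Prop) : Prop :=
  ∀ (F : Finset β) (x : β), (∀ y ∈ F, r x y) → ∃ z, r x z ∧ (∀ y ∈ F, r z y)

/-- An ideal: a nonempty directed lower set. -/
def IsIdeal (r : β → β → Prop) (I : Set β) : Prop :=
  I.Nonempty ∧ (∀ x y, r x y → y ∈ I → x ∈ I) ∧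
    ∀ x ∈ I, ∀ y ∈ I, ∃ z ∈ I, r x z ∧ r y z

/-- The ideal completion: ideals ordered by inclusion. -/
def IdealCompletion (r : β → β → Prop) := {I : Set β // IsIdeal r I}

instance IdealCompletion.instPartialOrder {β : Type*} (r : β → β → Prop) :
    PartialOrder (IdealCompletion r) where
  le I J := I.1 ⊆ J.1
  le_refl I := subset_rfl
  le_trans I J K h1 h2 := Set.Subset.trans h1 h2
  le_antisymm I J h1 h2 := Subtype.ext (Set.Subset.antisymm h1 h2)

end Rel

/-- The order on maximal elements induced by interval endpoints. -/
def maxLe {α : Type*} (left right : α → α) (a b : α) : Prop :=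
  ∃ x, left x = a ∧ right x = b

/-- An interval poset. -/
structure IntervalPoset (α : Type*) [PartialOrder α] where
  left : α → α
  right : α → α
  left_max : ∀ x, IsMax (left x)
  right_max : ∀ x, IsMax (right x)
  glb : ∀ x, IsGLB {left x, right x} x
  glue : ∀ x y, right x = left y →
    ∃ z, IsGLB {x, y} z ∧ left z = left x ∧ right z = right y
  sub_left : ∀ x p, IsMax p → x ≤ p →
    ∃ z, IsGLB {left x, p} z ∧ left z = left x ∧ right z = p
  sub_right : ∀ x p, IsMax p → x ≤ p →
    ∃ z, IsGLB {p, right x} z ∧ left z = p ∧ right z = right x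

/-- An interval domain. -/
structure IntervalDomain (α : Type*) [PartialOrder α] extends IntervalPoset α where
  dcpo : ∀ S : Set α, S.Nonempty → DirectedOn (· ≤ ·) S → ∃ d, IsLUB S d
  cont : ContinuousPoset α
  ax1 : ∀ x p, IsMax p → wayBelow x p →
    (∀ z, IsGLB {left x, p} z → ∃ u, wayBelow z u) ∧
    (∀ z, IsGLB {p, right x} z → ∃ u, wayBelow z u)
  ax2b : ∀ x : α, (∃ u, wayBelow x u) ↔
    (∀ y, left y = left x → y ≤ x →
      relWayBelow (fun u v => u ≤ v ∧ right u = right y ∧ right v = right y) y (right y))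
  ax2c : ∀ x : α, (∃ u, wayBelow x u) ↔
    (∀ y, right y = right x → y ≤ x →
      relWayBelow (fun u v => u ≤ v ∧ left u = left y ∧ left v = left y) y (left y))
  ax3a : ∀ (p : α) (S : Set α), S.Nonempty → S ⊆ {z | left z = p} →
    DirectedOn (· ≤ ·) S → ∀ u, IsLUB S u →
      left u = p ∧ ∀ (q : α) (T : Set α), T.Nonempty → T ⊆ {z | left z = q} →
        DirectedOn (· ≤ ·) T → ∀ v, IsLUB T v → right '' T = right '' S →
          right u = right v
  ax3b : ∀ (q : α) (S : Set α), S.Nonempty → S ⊆ {z | right z = q} →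
    DirectedOn (· ≤ ·) S → ∀ u, IsLUB S u →
      right u = q ∧ ∀ (p : α) (T : Set α), T.Nonempty → T ⊆ {z | right z = p} →
        DirectedOn (· ≤ ·) T → ∀ v, IsLUB T v → left '' T = left '' S →
          left u = left v
  ax4 : ∀ x : α, @IsCompact α (scottTop α) ({y | x ≤ y} ∩ {y | IsMax y})

lemma wayBelow_le {α : Type*} [PartialOrder α] {a x : α} (h : wayBelow a x) : a ≤ x := by
  obtain ⟨s, hs, hle⟩ := h {x} ⟨x, rfl⟩
    (by intro u hu v hv; exact ⟨x, rfl, by simp_all, by simp_all⟩) x isLUB_singleton le_rfl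
  simp only [Set.mem_singleton_iff] at hs
  exact hs ▸ hle

lemma exists_wayBelow_above {α : Type*} [PartialOrder α] (h : Bicontinuous α) (x : α) :
    ∃ b, wayBelow x b := by
  by_contra hc
  push_neg at hc
  have hempty : {y | wayBelow x y} = (∅ : Set α) := by
    ext y; simp [hc y]
  have hglb := (h.2.2 x).2
  rw [hempty] at hglb
  have htop : ∀ z : α, z ≤ x := fun z => hglb.2 (by simp [lowerBounds])
  have : wayBelow x x := by
    rw [h.2.1]
    intro S hS _ i _ _
    obtain ⟨s, hs⟩ := hS
    exact ⟨s, hs, htop s⟩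
  exact hc x this

/-- Given ¬ x ≤ y, produce separating basic open intervals. -/
lemma interval_sep {α : Type*} [PartialOrder α] (h : Bicontinuous α) {x y : α}
    (hxy : ¬ x ≤ y) : ∃ u v : Set α, u ∈ intervalBasis α ∧ v ∈ intervalBasis α ∧
      x ∈ u ∧ y ∈ v ∧ Disjoint u v := by
  -- a ≪ x with ¬ a ≤ y
  obtain ⟨S, hSsub, hSne, hSdir, hSlub⟩ := h.1 x
  have hex : ∃ a ∈ S, ¬ a ≤ y := by
    by_contra hc
    push_neg at hc
    exact hxy (hSlub.2 hc)
  obtain ⟨a, haS, hay⟩ := hex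
  have hax : wayBelow a x := hSsub haS
  -- b with x ≪ b
  obtain ⟨b, hxb⟩ := exists_wayBelow_above h x
  -- a' ≪ y
  obtain ⟨T, hTsub, hTne, _, _⟩ := h.1 y
  obtain ⟨a', ha'T⟩ := hTne
  have ha'y : wayBelow a' y := hTsub ha'T
  -- b' with y ≪ b' and ¬ a ≤ b'
  obtain ⟨hdir, hglb⟩ := h.2.2 y
  have hex' : ∃ b' ∈ {z | wayBelow y z}, ¬ a ≤ b' := by
    by_contra hc
    push_neg at hc
    exact hay (hglb.2 hc)
  obtain ⟨b', hyb', hab'⟩ := hex'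
  refine ⟨{z | wayBelow a z ∧ wayBelow z b}, {z | wayBelow a' z ∧ wayBelow z b'},
    ⟨a, b, rfl⟩, ⟨a', b', rfl⟩, ⟨hax, hxb⟩, ⟨ha'y, hyb'⟩, ?_⟩
  rw [Set.disjoint_left]
  rintro z ⟨haz, _⟩ ⟨_, hzb'⟩
  exact hab' ((wayBelow_le haz).trans (wayBelow_le hzb'))

/-- a bicontinuous poset is Hausdorff in its interval topology. -/
theorem interval_t2 {α : Type*} [PartialOrder α] (h : Bicontinuous α) :
    @T2Space α (intervalTop α) := by
  letI : TopologicalSpace α := intervalTop α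
  constructor
  intro x y hxy
  have hne : ¬ x ≤ y ∨ ¬ y ≤ x := by
    by_contra hc
    push_neg at hc
    exact hxy (le_antisymm hc.1 hc.2)
  rcases hne with hn | hn
  · obtain ⟨u, v, hu, hv, hxu, hyv, hd⟩ := interval_sep h hn
    exact ⟨u, v, TopologicalSpace.GenerateOpen.basic u hu,
      TopologicalSpace.GenerateOpen.basic v hv, hxu, hyv, hd⟩
  · obtain ⟨u, v, hu, hv, hxu, hyv, hd⟩ := interval_sep h hn
    exact ⟨v, u, TopologicalSpace.GenerateOpen.basic v hv,
      TopologicalSpace.GenerateOpen.basic u hu, hyv, hxu, hd.symm⟩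
end

section
/- If C is a countable dense subset of a bicontinuous poset X in its interval topology, then for every x ∈ X the set ↡x ∩ C contains a directed set with supremum x, and ↟x ∩ C contains a filtered set with infimum x. -/
open Set

section AuxLemmas

variable {α : Type*} [PartialOrder α]

lemma wb_le {a x : α} (h : wayBelow a x) : a ≤ x := by
  obtain ⟨s, hs, hle⟩ := h {x} ⟨x, rfl⟩
    (fun p hp q hq => ⟨x, rfl, by simp_all, by simp_all⟩) x isLUB_singleton le_rfl
  simp only [Set.mem_singleton_iff] at hs
  exact hs ▸ hle

lemma le_wb {a b c : α} (hab : a ≤ b) (h : wayBelow b c) : wayBelow a c :=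
  fun S hne hdir d hlub hcd =>
    let ⟨s, hs, hle⟩ := h S hne hdir d hlub hcd
    ⟨s, hs, hab.trans hle⟩

lemma wb_le_right {a b c : α} (h : wayBelow a b) (hbc : b ≤ c) : wayBelow a c :=
  fun S hne hdir d hlub hcd => h S hne hdir d hlub (hbc.trans hcd)

lemma interp (hc : ContinuousPoset α) {a x : α} (h : wayBelow a x) :
    ∃ b, wayBelow a b ∧ wayBelow b x := by
  obtain ⟨D, hDsub, hDne, hDdir, hDlub⟩ := hc x
  choose T hTsub hTne hTdir hTlub using hc
  set S : Set α := ⋃ b ∈ D, T b with hS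
  have hmem : ∀ {s b : α}, b ∈ D → s ∈ T b → s ∈ S := fun {s b} hb hs =>
    Set.mem_biUnion hb hs
  have hmem' : ∀ {s : α}, s ∈ S → ∃ b ∈ D, s ∈ T b := fun {s} hs => by
    simpa using Set.mem_iUnion₂.mp hs
  have hSne : S.Nonempty := by
    obtain ⟨b, hb⟩ := hDne
    obtain ⟨t, ht⟩ := hTne b
    exact ⟨t, hmem hb ht⟩
  have key : ∀ {s b e : α}, s ∈ T b → b ≤ e → ∃ u ∈ T e, s ≤ u := by
    intro s b e hs hbe
    exact wb_le_right (hTsub b hs) hbe (T e) (hTne e) (hTdir e) e (hTlub e) le_rfl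
  have hSdir : DirectedOn (· ≤ ·) S := by
    intro s hs t ht
    obtain ⟨b, hb, hsb⟩ := hmem' hs
    obtain ⟨b', hb', htb'⟩ := hmem' ht
    obtain ⟨e, he, hbe, hb'e⟩ := hDdir b hb b' hb'
    obtain ⟨u, hu, hsu⟩ := key hsb hbe
    obtain ⟨u', hu', htu'⟩ := key htb' hb'e
    obtain ⟨v, hv, huv, hu'v⟩ := hTdir e u hu u' hu'
    exact ⟨v, hmem he hv, hsu.trans huv, htu'.trans hu'v⟩
  have hSlub : IsLUB S x := by
    constructor
    · intro s hs
      obtain ⟨b, hb, hsb⟩ := hmem' hs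
      exact (wb_le (hTsub b hsb)).trans (hDlub.1 hb)
    · intro u hu
      refine hDlub.2 fun b hb => (hTlub b).2 fun t ht => hu (hmem hb ht)
  obtain ⟨s, hsS, has⟩ := h S hSne hSdir x hSlub le_rfl
  obtain ⟨b, hb, hsb⟩ := hmem' hsS
  exact ⟨b, le_wb has (hTsub b hsb), hDsub hb⟩

lemma upNe (h : Bicontinuous α) (x : α) : ∃ y, wayBelow x y := by
  by_contra hne
  push_neg at hne
  have htop : ∀ z : α, z ≤ x :=
    fun z => (h.2.2 x).2.2 (fun y hy => absurd hy (hne y))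
  have : wayBelow x x := (h.2.1 x x).mpr (fun S hSne _ i _ _ =>
    let ⟨s, hs⟩ := hSne; ⟨s, hs, htop s⟩)
  exact hne x this

lemma dinterp (h : Bicontinuous α) {x z : α} (hxz : wayBelow x z) :
    ∃ a, wayBelow x a ∧ wayBelow a z := by
  set T : Set α := ⋃ y ∈ {y : α | wayBelow x y}, {t : α | wayBelow y t} with hT
  have hmem : ∀ {t y : α}, wayBelow x y → wayBelow y t → t ∈ T := fun {t y} hy ht =>
    Set.mem_biUnion hy ht
  have hmem' : ∀ {t : α}, t ∈ T → ∃ y, wayBelow x y ∧ wayBelow y t := fun {t} ht => by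
    simpa using Set.mem_iUnion₂.mp ht
  have hTne : T.Nonempty := by
    obtain ⟨y, hy⟩ := upNe h x
    obtain ⟨t, ht⟩ := upNe h y
    exact ⟨t, hmem hy ht⟩
  have key : ∀ {e t : α}, wayBelow e t → ∃ s, wayBelow e s ∧ s ≤ t := by
    intro e t het
    obtain ⟨s, hs, hst⟩ := (h.2.1 e t).mp het {s | wayBelow e s} (upNe h e)
      (h.2.2 e).1 e (h.2.2 e).2 le_rfl
    exact ⟨s, hs, hst⟩
  have hTdir : DirectedOn (· ≥ ·) T := by
    intro t ht t' ht'
    obtain ⟨y, hy, hyt⟩ := hmem' ht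
    obtain ⟨y', hy', hy't'⟩ := hmem' ht'
    obtain ⟨e, he, hey, hey'⟩ := (h.2.2 x).1 y hy y' hy'
    obtain ⟨s, hes, hst⟩ := key (le_wb hey hyt)
    obtain ⟨s', hes', hs't'⟩ := key (le_wb hey' hy't')
    obtain ⟨v, hv, hvs, hvs'⟩ := (h.2.2 e).1 s hes s' hes'
    exact ⟨v, hmem he hv, le_trans hvs hst, le_trans hvs' hs't'⟩
  have hTglb : IsGLB T x := by
    constructor
    · intro t ht
      obtain ⟨y, hy, hyt⟩ := hmem' ht
      exact (wb_le hy).trans (wb_le hyt)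
    · intro l hl
      refine (h.2.2 x).2.2 fun y hy => (h.2.2 y).2.2 fun t ht => hl (hmem hy ht)
  obtain ⟨t, htT, htz⟩ := (h.2.1 x z).mp hxz T hTne hTdir x hTglb le_rfl
  obtain ⟨y, hy, hyt⟩ := hmem' htT
  exact ⟨y, hy, wb_le_right hyt htz⟩

lemma downDir (hc : ContinuousPoset α) (x : α) :
    DirectedOn (· ≤ ·) {a : α | wayBelow a x} := by
  obtain ⟨D, hDsub, hDne, hDdir, hDlub⟩ := hc x
  intro a ha b hb
  obtain ⟨d1, hd1, had⟩ := ha D hDne hDdir x hDlub le_rfl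
  obtain ⟨d2, hd2, hbd⟩ := hb D hDne hDdir x hDlub le_rfl
  obtain ⟨e, he, h1e, h2e⟩ := hDdir d1 hd1 d2 hd2
  exact ⟨e, hDsub he, had.trans h1e, hbd.trans h2e⟩

lemma dense_hit {C : Set α} (hdense : @Dense α (intervalTop α) C) (a b w : α)
    (hw : wayBelow a w ∧ wayBelow w b) :
    ∃ c ∈ C, wayBelow a c ∧ wayBelow c b := by
  letI : TopologicalSpace α := intervalTop α
  have hopen : @IsOpen α (intervalTop α) {x | wayBelow a x ∧ wayBelow x b} :=
    TopologicalSpace.isOpen_generateFrom_of_mem ⟨a, b, rfl⟩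
  obtain ⟨c, hc1, hc2⟩ :=
    hdense.inter_open_nonempty _ hopen ⟨w, hw⟩
  exact ⟨c, hc2, hc1⟩

end AuxLemmas

/-- for a countable dense subset `C` of a bicontinuous poset and any
`x`, `↡x ∩ C` contains a directed set with supremum `x` and `↟x ∩ C` contains a
filtered set with infimum `x`. -/
theorem dense_approximates {α : Type*} [PartialOrder α]
    (h : Bicontinuous α) (C : Set α) (hC : C.Countable)
    (hdense : @Dense α (intervalTop α) C) (x : α) :
    (∃ S : Set α, S ⊆ {a | wayBelow a x} ∩ C ∧ S.Nonempty ∧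
      DirectedOn (· ≤ ·) S ∧ IsLUB S x) ∧
    (∃ S : Set α, S ⊆ {a | wayBelow x a} ∩ C ∧ S.Nonempty ∧
      DirectedOn (· ≥ ·) S ∧ IsGLB S x) := by
  have hc := h.1
  have claim1 : ∀ a : α, wayBelow a x → ∃ c ∈ C, a ≤ c ∧ wayBelow c x := by
    intro a ha
    obtain ⟨b, hab, hbx⟩ := interp hc ha
    obtain ⟨b', hbb', hb'x⟩ := interp hc hbx
    obtain ⟨w, hbw, hwb'⟩ := interp hc hbb'
    obtain ⟨c, hcC, hbc, hcb'⟩ := dense_hit hdense b b' w ⟨hbw, hwb'⟩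
    exact ⟨c, hcC, (wb_le hab).trans (wb_le hbc), le_wb (wb_le hcb') hb'x⟩
  have claim2 : ∀ y : α, wayBelow x y → ∃ c ∈ C, c ≤ y ∧ wayBelow x c := by
    intro y hy
    obtain ⟨b, hxb, hby⟩ := dinterp h hy
    obtain ⟨b', hxb', hb'b⟩ := dinterp h hxb
    obtain ⟨w, hb'w, hwb⟩ := interp hc hb'b
    obtain ⟨c, hcC, hb'c, hcb⟩ := dense_hit hdense b' b w ⟨hb'w, hwb⟩
    exact ⟨c, hcC, (wb_le hcb).trans (wb_le hby), wb_le_right hxb' (wb_le hb'c)⟩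
  constructor
  · refine ⟨{a : α | wayBelow a x} ∩ C, subset_rfl, ?_, ?_, ?_, ?_⟩
    · obtain ⟨D, hDsub, hDne, hDdir, hDlub⟩ := hc x
      obtain ⟨a, ha⟩ := hDne
      obtain ⟨c, hcC, hac, hcx⟩ := claim1 a (hDsub ha)
      exact ⟨c, hcx, hcC⟩
    · intro c1 hc1 c2 hc2
      obtain ⟨d, hd, h1d, h2d⟩ := downDir hc x c1 hc1.1 c2 hc2.1
      obtain ⟨c, hcC, hdc, hcx⟩ := claim1 d hd
      exact ⟨c, ⟨hcx, hcC⟩, h1d.trans hdc, h2d.trans hdc⟩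
    · intro c hcS
      exact wb_le hcS.1
    · intro u hu
      obtain ⟨D, hDsub, hDne, hDdir, hDlub⟩ := hc x
      refine hDlub.2 fun a haD => ?_
      obtain ⟨c, hcC, hac, hcx⟩ := claim1 a (hDsub haD)
      exact hac.trans (hu ⟨hcx, hcC⟩)
  · refine ⟨{a : α | wayBelow x a} ∩ C, subset_rfl, ?_, ?_, ?_, ?_⟩
    · obtain ⟨y, hy⟩ := upNe h x
      obtain ⟨c, hcC, hcy, hxc⟩ := claim2 y hy
      exact ⟨c, hxc, hcC⟩
    · intro c1 hc1 c2 hc2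
      obtain ⟨y, hy, h1y, h2y⟩ := (h.2.2 x).1 c1 hc1.1 c2 hc2.1
      obtain ⟨c, hcC, hcy, hxc⟩ := claim2 y hy
      exact ⟨c, ⟨hxc, hcC⟩, le_trans hcy h1y, le_trans hcy h2y⟩
    · intro c hcS
      exact wb_le hcS.1
    · intro l hl
      refine (h.2.2 x).2.2 fun y hy => ?_
      obtain ⟨c, hcC, hcy, hxc⟩ := claim2 y hy
      exact (hl ⟨hxc, hcC⟩).trans hcy
end
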